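/- arXiv:1911.11229 — 11 statements merged into one kernel-verified Lean document; each statement's English description precedes it below -/
import Mathlib

section
/- Let V be a finite type, A : V → V → Prop the adjacency relation of a directed graph, and s, t ∈ V. Let X ⊆ V with s ∉ X and t ∉ X. Suppose that t is not reachable from s via the relation A'(u,v) := A(u,v) ∧ ¬(u ∈ X ∧ v ∈ X) (i.e., after deleting from G all arcs with both endpoints in X, there is no directed s–t path). Then X is an st-vertex cut of the square digraph G²: t is not reachable from s via the relation B(u,v) := A²(u,v) ∧ u ∉ X ∧ v ∉ X, where A²(u,v) := A(u,v) ∨ ∃ w, A(u,w) ∧ A(w,v). -/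
/-- Forward direction of the DDNP zero-detection correctness: if deleting from `G` all arcs
with both endpoints in `X` leaves no directed `s`–`t` path, then `X` is an `st`-vertex cut
of the square digraph `G²`. -/
theorem stmt_0 {V : Type*} [Fintype V] (A : V → V → Prop) (s t : V)
    (X : Set V) (hs : s ∉ X) (ht : t ∉ X)
    (h : ¬ Relation.ReflTransGen (fun u v => A u v ∧ ¬ (u ∈ X ∧ v ∈ X)) s t) :
    ¬ Relation.ReflTransGen
      (fun u v => (A u v ∨ ∃ w, A u w ∧ A w v) ∧ u ∉ X ∧ v ∉ X) s t := by
  intro hp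
  apply h
  clear h hs ht
  induction hp with
  | refl => exact Relation.ReflTransGen.refl
  | tail _ hbc ih =>
    obtain ⟨hA, hb, hc⟩ := hbc
    rcases hA with hA | ⟨w, h1, h2⟩
    · exact ih.tail ⟨hA, fun ⟨hx, _⟩ => hb hx⟩
    · exact (ih.tail ⟨h1, fun ⟨hx, _⟩ => hb hx⟩).tail ⟨h2, fun ⟨_, hx⟩ => hc hx⟩
end

section
/- Let V be a finite type, A : V → V → Prop the adjacency relation of a directed graph, and s, t ∈ V. Let Y ⊆ V with s ∉ Y and t ∉ Y. Suppose Y is an st-vertex cut of the square digraph G², i.e., t is not reachable from s via the relation B(u,v) := A²(u,v) ∧ u ∉ Y ∧ v ∉ Y, where A²(u,v) := A(u,v) ∨ ∃ w, A(u,w) ∧ A(w,v). Then after deleting from G all arcs with both endpoints in Y, there is no directed s–t path: t is not reachable from s via A'(u,v) := A(u,v) ∧ ¬(u ∈ Y ∧ v ∈ Y). -/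
/-- Converse direction of the DDNP zero-detection correctness: if `Y` is an `st`-vertex cut
of the square digraph `G²`, then deleting from `G` all arcs with both endpoints in `Y`
leaves no directed `s`–`t` path. -/
theorem stmt_1 {V : Type*} [Fintype V] (A : V → V → Prop) (s t : V)
    (Y : Set V) (hs : s ∉ Y) (ht : t ∉ Y)
    (h : ¬ Relation.ReflTransGen
      (fun u v => (A u v ∨ ∃ w, A u w ∧ A w v) ∧ u ∉ Y ∧ v ∉ Y) s t) :
    ¬ Relation.ReflTransGen (fun u v => A u v ∧ ¬ (u ∈ Y ∧ v ∈ Y)) s t := by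
  set B := fun u v => (A u v ∨ ∃ w, A u w ∧ A w v) ∧ u ∉ Y ∧ v ∉ Y with hB
  intro hp
  apply h
  have key : ∀ x, Relation.ReflTransGen (fun u v => A u v ∧ ¬ (u ∈ Y ∧ v ∈ Y)) x t →
      (x ∉ Y → Relation.ReflTransGen B x t) ∧
      (x ∈ Y → ∀ u, u ∉ Y → A u x → Relation.ReflTransGen B u t) := by
    intro x hx
    induction hx using Relation.ReflTransGen.head_induction_on with
    | refl =>
      exact ⟨fun _ => Relation.ReflTransGen.refl, fun hxY => absurd hxY ht⟩
    | head hab _ ih =>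
      rename_i a b _
      obtain ⟨hA, hnot⟩ := hab
      constructor
      · intro haY
        by_cases hbY : b ∈ Y
        · exact ih.2 hbY a haY hA
        · exact Relation.ReflTransGen.head ⟨Or.inl hA, haY, hbY⟩ (ih.1 hbY)
      · intro haY u huY hu
        have hbY : b ∉ Y := fun hbY => hnot ⟨haY, hbY⟩
        exact Relation.ReflTransGen.head ⟨Or.inr ⟨a, hu, hA⟩, huY, hbY⟩ (ih.1 hbY)
  exact (key s hp).1 hs
end

section
/- Let V be a finite type, A : V → V → Prop the adjacency relation of a directed graph, and s, t ∈ V distinct vertices such that ¬A(s,t) and there is no w with A(s,w) ∧ A(w,t). Then the minimum cardinality of a set X ⊆ V \ {s,t} such that t is not reachable from s via A'(u,v) := A(u,v) ∧ ¬(u ∈ X ∧ v ∈ X) equals the minimum cardinality of an st-vertex cut of the square digraph G², i.e., of a set Y ⊆ V \ {s,t} such that t is not reachable from s via B(u,v) := A²(u,v) ∧ u ∉ Y ∧ v ∉ Y, where A²(u,v) := A(u,v) ∨ ∃ w, A(u,w) ∧ A(w,v). (Both minima are over nonempty families: under the hypothesis, X = Y = V \ {s,t} is feasible for both.) -/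
/-- The minimum size of a downgrading set whose induced arcs form an `st`-cut of `G`
equals the minimum size of an `st`-vertex cut of the square digraph `G²`. -/
theorem stmt_2 {V : Type*} [Fintype V] (A : V → V → Prop) (s t : V)
    (hst : s ≠ t) (hA : ¬ A s t) (hA2 : ¬ ∃ w, A s w ∧ A w t) :
    sInf {n : ℕ | ∃ X : Set V, s ∉ X ∧ t ∉ X ∧
        (¬ Relation.ReflTransGen (fun u v => A u v ∧ ¬ (u ∈ X ∧ v ∈ X)) s t) ∧
        X.ncard = n}
      =
    sInf {n : ℕ | ∃ Y : Set V, s ∉ Y ∧ t ∉ Y ∧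
        (¬ Relation.ReflTransGen
          (fun u v => (A u v ∨ ∃ w, A u w ∧ A w v) ∧ u ∉ Y ∧ v ∉ Y) s t) ∧
        Y.ncard = n} := by
  have key : ∀ X : Set V, s ∉ X → t ∉ X →
      ((¬ Relation.ReflTransGen (fun u v => A u v ∧ ¬ (u ∈ X ∧ v ∈ X)) s t) ↔
       (¬ Relation.ReflTransGen
          (fun u v => (A u v ∨ ∃ w, A u w ∧ A w v) ∧ u ∉ X ∧ v ∉ X) s t)) := by
    intro X hs ht
    constructor
    · -- B-path gives A'-path
      intro h hB
      apply h
      clear h hs ht hst hA hA2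
      induction hB with
      | refl => exact Relation.ReflTransGen.refl
      | tail hpath hstep ih =>
          obtain ⟨hadj, hu, hv⟩ := hstep
          rcases hadj with h1 | ⟨w, h1, h2⟩
          · exact ih.tail ⟨h1, fun hc => hu hc.1⟩
          · exact (ih.tail ⟨h1, fun hc => hu hc.1⟩).tail ⟨h2, fun hc => hv hc.2⟩
    · -- A'-path gives B-path
      intro h hApath
      apply h
      have main : ∀ u, Relation.ReflTransGen (fun u v => A u v ∧ ¬ (u ∈ X ∧ v ∈ X)) u t →
          (u ∉ X → Relation.ReflTransGen
              (fun u v => (A u v ∨ ∃ w, A u w ∧ A w v) ∧ u ∉ X ∧ v ∉ X) u t) ∧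
          (u ∈ X → ∀ p, p ∉ X → A p u → Relation.ReflTransGen
              (fun u v => (A u v ∨ ∃ w, A u w ∧ A w v) ∧ u ∉ X ∧ v ∉ X) p t) := by
        intro u hu
        induction hu using Relation.ReflTransGen.head_induction_on with
        | refl => exact ⟨fun _ => Relation.ReflTransGen.refl, fun htX => absurd htX ht⟩
        | @head a b hstep hpath ih =>
            obtain ⟨hab, hnab⟩ := hstep
            constructor
            · intro haX
              by_cases hbX : b ∈ X
              · exact ih.2 hbX a haX hab
              · exact Relation.ReflTransGen.head ⟨Or.inl hab, haX, hbX⟩ (ih.1 hbX)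
            · intro haX p hpX hpa
              have hbX : b ∉ X := fun hb => hnab ⟨haX, hb⟩
              exact Relation.ReflTransGen.head
                ⟨Or.inr ⟨a, hpa, hab⟩, hpX, hbX⟩ (ih.1 hbX)
      exact (main s hApath).1 hs
  congr 1
  ext n
  constructor <;> rintro ⟨X, hs, ht, hcut, hn⟩
  · exact ⟨X, hs, ht, (key X hs ht).1 hcut, hn⟩
  · exact ⟨X, hs, ht, (key X hs ht).2 hcut, hn⟩
end

section
/- Let G be a finite simple graph, let k ≥ 2 be a natural number, let β ≥ 1 be a real number, and let l ≥ 0 be a real number. Suppose V' is a set of vertices of G with k ≤ |V'| and (|V'| : ℝ) ≤ β·k, such that the number of edges of G with both endpoints in V' is at least l. Then there exists a set S ⊆ V' with |S| = k such that the number of edges of G with both endpoints in S is at least l / (2·β²). -/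
open Finset

lemma count_supersets {α : Type*} [DecidableEq α] (V' t : Finset α) (k : ℕ)
    (ht : t ⊆ V') (htk : t.card ≤ k) :
    ((V'.powersetCard k).filter (fun S => t ⊆ S)).card
      = (V'.card - t.card).choose (k - t.card) := by
  rw [← Finset.card_sdiff_of_subset ht, ← Finset.card_powersetCard]
  apply Finset.card_bij' (fun S _ => S \ t) (fun A _ => A ∪ t)
  · intro S hS
    simp only [mem_filter, mem_powersetCard] at hS ⊢
    obtain ⟨⟨hSV, hSk⟩, htS⟩ := hS
    refine ⟨fun x hx => ?_, by rw [card_sdiff_of_subset htS, hSk]⟩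
    simp only [mem_sdiff] at hx ⊢
    exact ⟨hSV hx.1, hx.2⟩
  · intro A hA
    simp only [mem_powersetCard] at hA
    obtain ⟨hAV, hAk⟩ := hA
    have hdisj : Disjoint A t := by
      refine Finset.disjoint_left.mpr fun x hx hxt => ?_
      exact (Finset.mem_sdiff.mp (hAV hx)).2 hxt
    simp only [mem_filter, mem_powersetCard]
    refine ⟨⟨union_subset (fun x hx => (Finset.mem_sdiff.mp (hAV hx)).1) ht, ?_⟩,
      subset_union_right⟩
    rw [card_union_of_disjoint hdisj, hAk]
    omega
  · intro S hS
    simp only [mem_filter] at hS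
    exact sdiff_union_of_subset hS.2
  · intro A hA
    simp only [mem_powersetCard] at hA
    have hdisj : Disjoint A t := by
      refine Finset.disjoint_left.mpr fun x hx hxt => ?_
      exact (Finset.mem_sdiff.mp (hA.1 hx)).2 hxt
    rw [union_sdiff_right, sdiff_eq_self_of_disjoint hdisj]

set_option maxHeartbeats 800000 in
/-- Counting step in the DkS hardness reductions: a vertex set `V'` of size between `k`
and `β·k` inducing at least `l` edges contains a `k`-vertex subset inducing at least
`l/(2β²)` edges. -/
theorem stmt_6 {V : Type*} [Fintype V] [DecidableEq V] (G : SimpleGraph V)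
    (k : ℕ) (hk : 2 ≤ k) (β : ℝ) (hβ : 1 ≤ β) (l : ℝ) (hl : 0 ≤ l)
    (V' : Finset V) (hkV' : k ≤ V'.card) (hV'β : (V'.card : ℝ) ≤ β * k)
    (hind : l ≤ (({e ∈ G.edgeSet | ∀ v ∈ e, v ∈ V'} : Set (Sym2 V)).ncard : ℝ)) :
    ∃ S ⊆ V', S.card = k ∧
      l / (2 * β ^ 2) ≤ (({e ∈ G.edgeSet | ∀ v ∈ e, v ∈ S} : Set (Sym2 V)).ncard : ℝ) := by
  classical
  set n := V'.card with hn
  set E := G.edgeFinset.filter (fun e => ∀ v ∈ e, v ∈ V') with hE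
  have hsetF : ∀ (T : Finset V),
      ({e ∈ G.edgeSet | ∀ v ∈ e, v ∈ T} : Set (Sym2 V))
        = ↑(G.edgeFinset.filter (fun e => ∀ v ∈ e, v ∈ T)) := by
    intro T
    ext e
    simp [SimpleGraph.mem_edgeFinset]
  have hindE : l ≤ (E.card : ℝ) := by
    rw [hsetF V', Set.ncard_coe_finset] at hind
    exact hind
  -- per-edge counting
  have hedge : ∀ e ∈ E, ((V'.powersetCard k).filter (fun S => ∀ v ∈ e, v ∈ S)).card
      = (n - 2).choose (k - 2) := by
    intro e he
    induction e using Sym2.ind with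
    | _ u v =>
      simp only [hE, mem_filter, SimpleGraph.mem_edgeFinset, SimpleGraph.mem_edgeSet,
        Sym2.mem_iff, forall_eq_or_imp, forall_eq] at he
      obtain ⟨hadj, huV, hvV⟩ := he
      have huv : u ≠ v := G.ne_of_adj hadj
      have hfeq : (V'.powersetCard k).filter (fun S => ∀ w ∈ s(u, v), w ∈ S)
          = (V'.powersetCard k).filter (fun S => ({u, v} : Finset V) ⊆ S) :=
        Finset.filter_congr fun S _ => by
          simp [Sym2.mem_iff, Finset.insert_subset_iff]
      have hcard2 : ({u, v} : Finset V).card = 2 := by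
        rw [card_insert_of_notMem (by simpa using huv), card_singleton]
      have hsub : ({u, v} : Finset V) ⊆ V' := by
        simp [Finset.insert_subset_iff, huV, hvV]
      rw [hfeq, count_supersets V' {u, v} k hsub (hcard2 ▸ hk), hcard2]
  -- double counting
  have key : ∑ S ∈ V'.powersetCard k,
      (E.filter (fun e => ∀ v ∈ e, v ∈ S)).card = E.card * (n - 2).choose (k - 2) := by
    calc ∑ S ∈ V'.powersetCard k, (E.filter (fun e => ∀ v ∈ e, v ∈ S)).card
        = ∑ S ∈ V'.powersetCard k, ∑ e ∈ E, if (∀ v ∈ e, v ∈ S) then 1 else 0 :=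
          Finset.sum_congr rfl fun S _ => Finset.card_filter _ _
      _ = ∑ e ∈ E, ∑ S ∈ V'.powersetCard k, if (∀ v ∈ e, v ∈ S) then 1 else 0 :=
          Finset.sum_comm
      _ = ∑ e ∈ E, ((V'.powersetCard k).filter (fun S => ∀ v ∈ e, v ∈ S)).card :=
          Finset.sum_congr rfl fun e _ => (Finset.card_filter _ _).symm
      _ = ∑ _e ∈ E, (n - 2).choose (k - 2) := Finset.sum_congr rfl hedge
      _ = E.card * (n - 2).choose (k - 2) := by rw [Finset.sum_const, smul_eq_mul]
  -- averaging
  have hchoosepos : 0 < n.choose k := Nat.choose_pos hkV'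
  have hne : (V'.powersetCard k).Nonempty := by
    rw [← Finset.card_pos, Finset.card_powersetCard]
    exact hchoosepos
  have havg : ∃ S ∈ V'.powersetCard k,
      ((E.card * (n - 2).choose (k - 2) : ℝ) / (n.choose k))
        ≤ ((E.filter (fun e => ∀ v ∈ e, v ∈ S)).card : ℝ) := by
    apply Finset.exists_le_of_sum_le hne
    rw [Finset.sum_const, Finset.card_powersetCard, nsmul_eq_mul,
      mul_div_cancel₀ _ (by exact_mod_cast hchoosepos.ne')]
    exact_mod_cast key.ge
  obtain ⟨S, hS, hSavg⟩ := havg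
  rw [Finset.mem_powersetCard] at hS
  refine ⟨S, hS.1, hS.2, ?_⟩
  have hfilter : G.edgeFinset.filter (fun e => ∀ v ∈ e, v ∈ S)
      = E.filter (fun e => ∀ v ∈ e, v ∈ S) := by
    rw [hE, Finset.filter_filter]
    apply Finset.filter_congr
    intro e _
    constructor
    · intro h; exact ⟨fun v hv => hS.1 (h v hv), h⟩
    · intro h; exact h.2
  rw [hsetF S, Set.ncard_coe_finset, hfilter]
  refine le_trans ?_ hSavg
  -- binomial identity
  have hn2 : 2 ≤ n := le_trans hk hkV'
  have hid : n.choose k * (k * (k - 1)) = (n - 2).choose (k - 2) * (n * (n - 1)) := by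
    have h1 : n * (n - 1).choose (k - 1) = n.choose k * k := by
      have h := Nat.add_one_mul_choose_eq (n - 1) (k - 1)
      rw [show n - 1 + 1 = n by omega, show k - 1 + 1 = k by omega] at h
      exact h
    have h2 : (n - 1) * (n - 2).choose (k - 2) = (n - 1).choose (k - 1) * (k - 1) := by
      have h := Nat.add_one_mul_choose_eq (n - 2) (k - 2)
      rw [show n - 2 + 1 = n - 1 by omega, show k - 2 + 1 = k - 1 by omega,
        ] at h
      exact h
    calc n.choose k * (k * (k - 1)) = (n.choose k * k) * (k - 1) := by ring
      _ = n * ((n - 1).choose (k - 1) * (k - 1)) := by rw [← h1]; ring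
      _ = n * ((n - 1) * (n - 2).choose (k - 2)) := by rw [h2]
      _ = (n - 2).choose (k - 2) * (n * (n - 1)) := by ring
  have hidcast : (n.choose k : ℝ) * ((k : ℝ) * ((k : ℝ) - 1))
      = ((n - 2).choose (k - 2) : ℝ) * ((n : ℝ) * ((n : ℝ) - 1)) := by
    have h := congrArg (Nat.cast : ℕ → ℝ) hid
    push_cast [Nat.cast_sub (show 1 ≤ k by omega), Nat.cast_sub (show 1 ≤ n by omega)] at h
    linarith
  -- real arithmetic
  have hβ0 : (0 : ℝ) < β := lt_of_lt_of_le one_pos hβ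
  have hCpos : (0 : ℝ) < (n.choose k : ℝ) := by exact_mod_cast hchoosepos
  have hC2pos : (0 : ℝ) ≤ ((n - 2).choose (k - 2) : ℝ) := by positivity
  have hk2 : (2 : ℝ) ≤ (k : ℝ) := by exact_mod_cast hk
  have hn2R : (2 : ℝ) ≤ (n : ℝ) := by exact_mod_cast hn2
  have hkk : (0 : ℝ) < (k : ℝ) * ((k : ℝ) - 1) := by nlinarith
  have hstep : (n : ℝ) * ((n : ℝ) - 1) ≤ 2 * β ^ 2 * ((k : ℝ) * ((k : ℝ) - 1)) := by
    have hn0 : (0 : ℝ) ≤ (n : ℝ) := by positivity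
    have hsq : (n : ℝ) * (n : ℝ) ≤ (β * k) * (β * k) :=
      mul_le_mul hV'β hV'β hn0 (by positivity)
    have e1 : (n : ℝ) * ((n : ℝ) - 1) ≤ (n : ℝ) * (n : ℝ) := by nlinarith
    have e3 : β * (k : ℝ) * (β * (k : ℝ)) ≤ 2 * β ^ 2 * ((k : ℝ) * ((k : ℝ) - 1)) := by
      nlinarith [mul_nonneg (mul_nonneg (sq_nonneg β) (by positivity : (0:ℝ) ≤ (k:ℝ)))
        (by linarith : (0:ℝ) ≤ (k:ℝ) - 2)]
    linarith
  rw [div_le_div_iff₀ (by positivity) hCpos]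
  have hmain : l * (n.choose k : ℝ) * ((k : ℝ) * ((k : ℝ) - 1))
      ≤ (E.card : ℝ) * ((n - 2).choose (k - 2) : ℝ) * (2 * β ^ 2) * ((k : ℝ) * ((k : ℝ) - 1)) := by
    calc l * (n.choose k : ℝ) * ((k : ℝ) * ((k : ℝ) - 1))
        = l * (((n - 2).choose (k - 2) : ℝ) * ((n : ℝ) * ((n : ℝ) - 1))) := by
          rw [mul_assoc, hidcast]
      _ ≤ (E.card : ℝ) * (((n - 2).choose (k - 2) : ℝ) * (2 * β ^ 2 * ((k : ℝ) * ((k : ℝ) - 1)))) := by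
          have hnn : (0:ℝ) ≤ (n:ℝ) * ((n:ℝ) - 1) := by nlinarith
          exact mul_le_mul hindE (mul_le_mul_of_nonneg_left hstep hC2pos)
            (mul_nonneg hC2pos hnn) (le_trans hl hindE)
      _ = (E.card : ℝ) * ((n - 2).choose (k - 2) : ℝ) * (2 * β ^ 2) * ((k : ℝ) * ((k : ℝ) - 1)) := by
          ring
  have := le_of_mul_le_mul_right hmain hkk
  linarith
end

section
/- Let k ≥ 1 and let M : Matrix (Fin (k+1)) (Fin (k+1)) ℝ be entrywise nonnegative. Suppose that for every nonempty set R of row indices and every nonempty set C of column indices, the number of pairs (i,j) ∈ R × C with M(i,j) ≠ 0 is at most |R| + |C| − 1, and suppose that the total number of pairs (i,j) with M(i,j) ≠ 0 equals 2k + 1. Then there exist indices i and j such that M(i,0) ≠ 0, M(0,j) ≠ 0, and ¬(i = 0 ∧ j = 0) (i.e., the entries M(i,0) and M(0,j) are in two distinct positions). -/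
open Finset

/-- Structural claim for constructing the contracted auxiliary graph `H'` in NVLDP: a
nonnegative `(k+1)×(k+1)` matrix whose every nonempty submatrix has at most `|R|+|C|-1`
nonzero entries and which has exactly `2k+1` nonzero entries in total has nonzero entries
in the first column and in the first row occupying two distinct positions. -/
theorem stmt_9 (k : ℕ) (hk : 1 ≤ k) (M : Matrix (Fin (k + 1)) (Fin (k + 1)) ℝ)
    (hM : ∀ i j, 0 ≤ M i j)
    (hsub : ∀ R C : Finset (Fin (k + 1)), R.Nonempty → C.Nonempty →
      ((R ×ˢ C).filter fun ij => M ij.1 ij.2 ≠ 0).card ≤ R.card + C.card - 1)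
    (htot : (Finset.univ.filter
        fun ij : Fin (k + 1) × Fin (k + 1) => M ij.1 ij.2 ≠ 0).card = 2 * k + 1) :
    ∃ i j : Fin (k + 1), M i 0 ≠ 0 ∧ M 0 j ≠ 0 ∧ ¬(i = 0 ∧ j = 0) := by
  classical
  set S := (Finset.univ.filter fun ij : Fin (k+1) × Fin (k+1) => M ij.1 ij.2 ≠ 0) with hS
  have hE : (Finset.univ.erase (0 : Fin (k+1))).card = k := by
    rw [card_erase_of_mem (mem_univ _), card_univ, Fintype.card_fin]
    omega
  have hEne : (Finset.univ.erase (0 : Fin (k+1))).Nonempty := by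
    rw [← card_pos, hE]; omega
  -- first row has a nonzero entry
  have hrow : ∃ j, M 0 j ≠ 0 := by
    by_contra h
    push_neg at h
    have hsubset : S ⊆ ((Finset.univ.erase (0 : Fin (k+1))) ×ˢ Finset.univ).filter
        fun ij => M ij.1 ij.2 ≠ 0 := by
      intro ij hij
      simp only [hS, mem_filter, mem_univ, true_and] at hij
      simp only [mem_filter, mem_product, mem_erase, mem_univ, and_true, true_and]
      refine ⟨?_, hij⟩
      intro h0
      exact hij (h0 ▸ h ij.2)
    have := (card_le_card hsubset).trans (hsub _ _ hEne univ_nonempty)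
    rw [htot, hE, card_univ, Fintype.card_fin] at this
    omega
  -- first column has a nonzero entry
  have hcol : ∃ i, M i 0 ≠ 0 := by
    by_contra h
    push_neg at h
    have hsubset : S ⊆ (Finset.univ ×ˢ (Finset.univ.erase (0 : Fin (k+1)))).filter
        fun ij => M ij.1 ij.2 ≠ 0 := by
      intro ij hij
      simp only [hS, mem_filter, mem_univ, true_and] at hij
      simp only [mem_filter, mem_product, mem_erase, mem_univ, and_true, true_and]
      refine ⟨?_, hij⟩
      intro h0
      exact hij (h0 ▸ h ij.1)
    have := (card_le_card hsubset).trans (hsub _ _ univ_nonempty hEne)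
    rw [htot, hE, card_univ, Fintype.card_fin] at this
    omega
  obtain ⟨j₀, hj₀⟩ := hrow
  obtain ⟨i₀, hi₀⟩ := hcol
  by_cases hi : ∃ i : Fin (k+1), i ≠ 0 ∧ M i 0 ≠ 0
  · obtain ⟨i, hi1, hi2⟩ := hi
    exact ⟨i, j₀, hi2, hj₀, fun h => hi1 h.1⟩
  by_cases hj : ∃ j : Fin (k+1), j ≠ 0 ∧ M 0 j ≠ 0
  · obtain ⟨j, hj1, hj2⟩ := hj
    exact ⟨i₀, j, hi₀, hj2, fun h => hj1 h.2⟩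
  -- contradiction case: only (0,0) touches first row/column
  exfalso
  push_neg at hi hj
  have hsubset : S ⊆ (((Finset.univ.erase (0 : Fin (k+1))) ×ˢ (Finset.univ.erase (0 : Fin (k+1)))).filter
      fun ij => M ij.1 ij.2 ≠ 0) ∪ {((0 : Fin (k+1)), (0 : Fin (k+1)))} := by
    intro ij hij
    simp only [hS, mem_filter, mem_univ, true_and] at hij
    rcases eq_or_ne ij.1 0 with h1 | h1
    · rcases eq_or_ne ij.2 0 with h2 | h2
      · apply mem_union_right
        simp [Prod.ext_iff, h1, h2]
      · exact absurd (h1 ▸ hij) (not_not.2 (hj ij.2 h2))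
    · rcases eq_or_ne ij.2 0 with h2 | h2
      · exact absurd (h2 ▸ hij) (not_not.2 (hi ij.1 h1))
      · apply mem_union_left
        simp only [mem_filter, mem_product, mem_erase, mem_univ, and_true]
        exact ⟨⟨h1, h2⟩, hij⟩
  have h1 := card_le_card hsubset
  have hA := hsub _ _ hEne hEne
  rw [hE] at hA
  have h2 := card_union_le
    ((((Finset.univ.erase (0 : Fin (k+1))) ×ˢ (Finset.univ.erase (0 : Fin (k+1)))).filter
      fun ij => M ij.1 ij.2 ≠ 0)) ({((0 : Fin (k+1)), (0 : Fin (k+1)))} : Finset _)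
  rw [card_singleton] at h2
  rw [htot] at h1
  omega
end

section
/- Let V be a finite type, A : V → V → Prop the adjacency relation of a directed graph G, and s, t ∈ V. Define the subdivided digraph H on vertex set V ⊕ ((V × V) × Fin 3) whose arcs are, for each pair (u,v) with A(u,v): inl u → inr ((u,v),0), inr ((u,v),0) → inr ((u,v),1), inr ((u,v),1) → inr ((u,v),2), and inr ((u,v),2) → inl v, and no other arcs. Let F* be any set of arcs of H, and let E* := {(u,v) : A(u,v) and at least one of the four arcs of the subdivision path of (u,v) belongs to F*}. Then inl t is unreachable from inl s in H after deleting the arcs in F* if and only if t is unreachable from s in G after deleting the arcs in E*. -/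
/-- Adjacency relation of the subdivided auxiliary digraph `H` used for the downgrading
LP (DLP): each arc `uv` of `G` is replaced by a directed path of four arcs through three
new vertices `((u,v), 0)`, `((u,v), 1)`, `((u,v), 2)`. -/
def subdivAdj {V : Type*} (A : V → V → Prop) :
    (V ⊕ ((V × V) × Fin 3)) → (V ⊕ ((V × V) × Fin 3)) → Prop :=
  fun x y => ∃ u v, A u v ∧
    ((x = Sum.inl u ∧ y = Sum.inr ((u, v), 0)) ∨
     (x = Sum.inr ((u, v), 0) ∧ y = Sum.inr ((u, v), 1)) ∨
     (x = Sum.inr ((u, v), 1) ∧ y = Sum.inr ((u, v), 2)) ∨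
     (x = Sum.inr ((u, v), 2) ∧ y = Sum.inl v))

/-- Cut correspondence for the DLP auxiliary graph: a set `F*` of subdivided arcs is an
`st`-cut of `H` exactly when the set `E*` of original arcs one of whose four copies lies
in `F*` is an `st`-cut of `G`. -/
theorem stmt_10 {V : Type*} [Fintype V] (A : V → V → Prop) (s t : V)
    (Fstar : Set ((V ⊕ ((V × V) × Fin 3)) × (V ⊕ ((V × V) × Fin 3)))) :
    (¬ Relation.ReflTransGen
        (fun x y => subdivAdj A x y ∧ (x, y) ∉ Fstar) (Sum.inl s) (Sum.inl t))
      ↔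
    (¬ Relation.ReflTransGen
        (fun u v => A u v ∧
          (u, v) ∉ {p : V × V | A p.1 p.2 ∧
            ((Sum.inl p.1, Sum.inr ((p.1, p.2), (0 : Fin 3))) ∈ Fstar ∨
             (Sum.inr ((p.1, p.2), (0 : Fin 3)), Sum.inr ((p.1, p.2), (1 : Fin 3))) ∈ Fstar ∨
             (Sum.inr ((p.1, p.2), (1 : Fin 3)), Sum.inr ((p.1, p.2), (2 : Fin 3))) ∈ Fstar ∨
             (Sum.inr ((p.1, p.2), (2 : Fin 3)), Sum.inl p.2) ∈ Fstar)}) s t) := by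
  set Q : V → V → Prop := (fun u v => A u v ∧
          (u, v) ∉ {p : V × V | A p.1 p.2 ∧
            ((Sum.inl p.1, Sum.inr ((p.1, p.2), (0 : Fin 3))) ∈ Fstar ∨
             (Sum.inr ((p.1, p.2), (0 : Fin 3)), Sum.inr ((p.1, p.2), (1 : Fin 3))) ∈ Fstar ∨
             (Sum.inr ((p.1, p.2), (1 : Fin 3)), Sum.inr ((p.1, p.2), (2 : Fin 3))) ∈ Fstar ∨
             (Sum.inr ((p.1, p.2), (2 : Fin 3)), Sum.inl p.2) ∈ Fstar)}) with hQ
  set R : (V ⊕ ((V × V) × Fin 3)) → (V ⊕ ((V × V) × Fin 3)) → Prop :=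
    (fun x y => subdivAdj A x y ∧ (x, y) ∉ Fstar) with hR
  rw [not_iff_not]
  constructor
  · -- H-reach → G-reach
    intro h
    let P : (V ⊕ ((V × V) × Fin 3)) → Prop := fun x =>
      match x with
      | Sum.inl u => Relation.ReflTransGen Q u t
      | Sum.inr ((u, v), i) => A u v ∧ Relation.ReflTransGen Q v t ∧
          (i.val ≤ 0 → (Sum.inr ((u,v),(0:Fin 3)), Sum.inr ((u,v),(1:Fin 3))) ∉ Fstar) ∧
          (i.val ≤ 1 → (Sum.inr ((u,v),(1:Fin 3)), Sum.inr ((u,v),(2:Fin 3))) ∉ Fstar) ∧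
          ((Sum.inr ((u,v),(2:Fin 3)), Sum.inl v) ∉ Fstar)
    have key : P (Sum.inl s) := by
      refine Relation.ReflTransGen.head_induction_on h ?_ ?_
      · exact Relation.ReflTransGen.refl
      · rintro x y ⟨⟨u, v, hA, hcase⟩, hxy⟩ _ hPy
        rcases hcase with ⟨hx, hy⟩ | ⟨hx, hy⟩ | ⟨hx, hy⟩ | ⟨hx, hy⟩ <;> subst hx <;> subst hy
        · obtain ⟨_, hvt, h1, h2, h3⟩ := hPy
          show Relation.ReflTransGen Q u t
          refine Relation.ReflTransGen.head ⟨hA, ?_⟩ hvt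
          intro ⟨_, hmem⟩
          rcases hmem with h | h | h | h
          · exact hxy h
          · exact h1 (by norm_num) h
          · exact h2 (by norm_num) h
          · exact h3 h
        · obtain ⟨_, hvt, _, h2, h3⟩ := hPy
          exact ⟨hA, hvt, fun _ => hxy, fun _ => h2 (by norm_num), h3⟩
        · obtain ⟨_, hvt, _, _, h3⟩ := hPy
          exact ⟨hA, hvt, by omega, fun _ => hxy, h3⟩
        · exact ⟨hA, hPy, by omega, by omega, hxy⟩
    exact key
  · -- G-reach → H-reach
    intro h
    refine Relation.ReflTransGen.head_induction_on h ?_ ?_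
    · exact Relation.ReflTransGen.refl
    · rintro u v ⟨hA, hE⟩ _ ih
      simp only [Set.mem_setOf_eq, not_and, not_or] at hE
      obtain ⟨h0, h1, h2, h3⟩ := hE hA
      refine Relation.ReflTransGen.head ⟨⟨u, v, hA, Or.inl ⟨rfl, rfl⟩⟩, h0⟩ ?_
      refine Relation.ReflTransGen.head ⟨⟨u, v, hA, Or.inr (Or.inl ⟨rfl, rfl⟩)⟩, h1⟩ ?_
      refine Relation.ReflTransGen.head ⟨⟨u, v, hA, Or.inr (Or.inr (Or.inl ⟨rfl, rfl⟩))⟩, h2⟩ ?_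
      exact Relation.ReflTransGen.head ⟨⟨u, v, hA, Or.inr (Or.inr (Or.inr ⟨rfl, rfl⟩))⟩, h3⟩ ih
end

section
/- Let V be a finite type, A : V → V → Prop the adjacency relation of a directed graph G, and s, t ∈ V. Define the digraph G' on vertex set V ⊕ (V × V) whose arcs are, for each pair (u,v) with A(u,v): inl u → inr (u,v) and inr (u,v) → inl v, and no other arcs. Let X' be a set of vertices of G' with inl s ∉ X' and inl t ∉ X', let X := {v ∈ V : inl v ∈ X'} and Y := {(u,v) : A(u,v) ∧ inr (u,v) ∈ X'}. Then inl t is unreachable from inl s in G' restricted to vertices outside X' if and only if t is unreachable from s in G via the relation A''(u,v) := A(u,v) ∧ u ∉ X ∧ v ∉ X ∧ (u,v) ∉ Y (i.e., after deleting the vertices in X and the arcs in Y from G). -/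
/-- Adjacency relation of the auxiliary digraph `G'` used in the bicriteria algorithm for
WNVIP: each arc `(u,v)` of `G` is subdivided by a new vertex `inr (u,v)`. -/
def subdivVAdj {V : Type*} (A : V → V → Prop) :
    (V ⊕ (V × V)) → (V ⊕ (V × V)) → Prop :=
  fun x y => ∃ u v, A u v ∧
    ((x = Sum.inl u ∧ y = Sum.inr (u, v)) ∨ (x = Sum.inr (u, v) ∧ y = Sum.inl v))

/-- Correspondence between `st`-vertex cuts of the subdivided graph `G'` and mixed
vertex-and-arc `st`-cuts of `G`. -/
theorem stmt_11 {V : Type*} [Fintype V] (A : V → V → Prop) (s t : V)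
    (X' : Set (V ⊕ (V × V))) (hs : Sum.inl s ∉ X') (ht : Sum.inl t ∉ X') :
    (¬ Relation.ReflTransGen
        (fun x y => subdivVAdj A x y ∧ x ∉ X' ∧ y ∉ X') (Sum.inl s) (Sum.inl t))
      ↔
    (¬ Relation.ReflTransGen
        (fun u v => A u v ∧ u ∉ {v : V | Sum.inl v ∈ X'} ∧ v ∉ {v : V | Sum.inl v ∈ X'} ∧
          (u, v) ∉ {p : V × V | A p.1 p.2 ∧ Sum.inr p ∈ X'}) s t) := by
  set R' : (V ⊕ (V × V)) → (V ⊕ (V × V)) → Prop :=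
    fun x y => subdivVAdj A x y ∧ x ∉ X' ∧ y ∉ X' with hR'
  set R : V → V → Prop :=
    fun u v => A u v ∧ u ∉ {v : V | Sum.inl v ∈ X'} ∧ v ∉ {v : V | Sum.inl v ∈ X'} ∧
      (u, v) ∉ {p : V × V | A p.1 p.2 ∧ Sum.inr p ∈ X'} with hR
  apply not_iff_not.mpr
  constructor
  · intro h
    have key : ∀ x, Relation.ReflTransGen R' (Sum.inl s) x →
        (∀ u, x = Sum.inl u → Relation.ReflTransGen R s u) ∧
        (∀ u v, x = Sum.inr (u, v) → Relation.ReflTransGen R s u ∧ A u v ∧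
          Sum.inl u ∉ X' ∧ Sum.inr (u, v) ∉ X') := by
      intro x hx
      induction hx with
      | refl => exact ⟨fun u hu => by cases hu; exact .refl, fun u v hv => by cases hv⟩
      | tail hab hbc ih =>
        rename_i b c
        obtain ⟨⟨a, w, haw, hcase⟩, hbX, hcX⟩ := hbc
        rcases hcase with ⟨hb, hc⟩ | ⟨hb, hc⟩
        · subst hb; subst hc
          refine ⟨?_, ?_⟩
          · intro u hu; exact absurd hu (by simp)
          intro u v hv
          simp only [Sum.inr.injEq, Prod.mk.injEq] at hv
          obtain ⟨h1, h2⟩ := hv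
          subst h1; subst h2
          exact ⟨(ih.1 a rfl), haw, hbX, hcX⟩
        · subst hb; subst hc
          refine ⟨?_, fun u v hv => absurd hv (by simp)⟩
          intro u hu
          cases hu
          obtain ⟨hreach, hA, huX, hpX⟩ := ih.2 a w rfl
          exact hreach.tail ⟨hA, huX, hcX, fun hmem => hpX hmem.2⟩
    exact (key _ h).1 t rfl
  · intro h
    induction h with
    | refl => exact .refl
    | tail hab hbc ih =>
      rename_i b c
      obtain ⟨hA, hbX, hcX, hpX⟩ := hbc
      have hmid : Sum.inr (b, c) ∉ X' := fun hm => hpX ⟨hA, hm⟩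
      exact ((ih hbX).tail ⟨⟨b, c, hA, Or.inl ⟨rfl, rfl⟩⟩, hbX, hmid⟩).tail
        ⟨⟨b, c, hA, Or.inr ⟨rfl, rfl⟩⟩, hmid, hcX⟩
end

section
/- Let G be a finite simple graph and let H be the graph with vertex set {s, t} ⊔ V(G) ⊔ E(G) (writing t_e for the vertex of H corresponding to edge e of G) and with edge set: {s,v} for every v ∈ V(G); {v, t_e} whenever v is an endpoint of e; and {t_e, t} for every e ∈ E(G). Let Y ⊆ V(G), and let F be an inclusion-minimal subset of {{t_e, t} : e ∈ E(G)} such that deleting the vertices Y and the edges F from H leaves no s–t path. Then F = {{t_e, t} : e ∈ E(G), e has at least one endpoint not in Y}; in particular |F| = |E(G)| − |E_Y|, where E_Y denotes the set of edges of G with both endpoints in Y. -/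
/-- Vertex type of the auxiliary graph `H` used in the DkS hardness reductions:
`Sum.inl 0` is the source `s`, `Sum.inl 1` is the sink `t`, `Sum.inr (Sum.inl v)` is the
original vertex `v` of `G`, and `Sum.inr (Sum.inr e)` is the subdivision vertex `t_e`
of the edge `e` of `G`. -/
abbrev AuxV {V : Type*} (G : SimpleGraph V) : Type _ := Fin 2 ⊕ (V ⊕ G.edgeSet)

/-- Adjacency of the auxiliary graph `H`: `s` is joined to every original vertex, each
subdivision vertex `t_e` is joined to the endpoints of `e`, and `t` is joined to every
subdivision vertex. -/
def auxAdj {V : Type*} (G : SimpleGraph V) : AuxV G → AuxV G → Prop := fun x y =>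
  (∃ v : V, (x = Sum.inl 0 ∧ y = Sum.inr (Sum.inl v)) ∨
            (x = Sum.inr (Sum.inl v) ∧ y = Sum.inl 0)) ∨
  (∃ (v : V) (e : G.edgeSet), v ∈ (e : Sym2 V) ∧
      ((x = Sum.inr (Sum.inl v) ∧ y = Sum.inr (Sum.inr e)) ∨
       (x = Sum.inr (Sum.inr e) ∧ y = Sum.inr (Sum.inl v)))) ∨
  (∃ e : G.edgeSet, (x = Sum.inr (Sum.inr e) ∧ y = Sum.inl 1) ∨
                    (x = Sum.inl 1 ∧ y = Sum.inr (Sum.inr e)))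

/-- Deleting the vertices in `Y` and the edges in `F` from the auxiliary graph `H`
leaves no `s`–`t` path. -/
def noSTPath {V : Type*} (G : SimpleGraph V) (Y : Set (AuxV G))
    (F : Set (Sym2 (AuxV G))) : Prop :=
  ¬ Relation.ReflTransGen
      (fun x y => auxAdj G x y ∧ x ∉ Y ∧ y ∉ Y ∧ s(x, y) ∉ F)
      (Sum.inl 0) (Sum.inl 1)

/-- The canonical cut: `{t_e, t}` for all edges `e` not induced by `Y` is a cut. -/
lemma cutT {V : Type*} (G : SimpleGraph V) (Y : Set V) :
    noSTPath G ((fun v => (Sum.inr (Sum.inl v) : AuxV G)) '' Y)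
      {p | ∃ e : G.edgeSet, (∃ v ∈ (e : Sym2 V), v ∉ Y) ∧
          p = s(Sum.inr (Sum.inr e), Sum.inl 1)} := by
  set Y' : Set (AuxV G) := (fun v => (Sum.inr (Sum.inl v) : AuxV G)) '' Y with hY'
  set T : Set (Sym2 (AuxV G)) := {p | ∃ e : G.edgeSet, (∃ v ∈ (e : Sym2 V), v ∉ Y) ∧
      p = s(Sum.inr (Sum.inr e), Sum.inl 1)} with hT
  intro h
  have key : ∀ x : AuxV G, Relation.ReflTransGen
      (fun x y => auxAdj G x y ∧ x ∉ Y' ∧ y ∉ Y' ∧ s(x, y) ∉ T) (Sum.inl 0) x →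
      x ≠ Sum.inl 1 ∧ ∀ e : G.edgeSet, x = Sum.inr (Sum.inr e) → ∃ v ∈ (e : Sym2 V), v ∉ Y := by
    intro x hx
    induction hx with
    | refl => exact ⟨by simp, by simp⟩
    | tail hab hbc ih =>
      obtain ⟨hadj, hbY, hcY, hF⟩ := hbc
      rcases hadj with ⟨v, ⟨hb, hc⟩ | ⟨hb, hc⟩⟩ |
        ⟨v, e', hv, ⟨hb, hc⟩ | ⟨hb, hc⟩⟩ | ⟨e', ⟨hb, hc⟩ | ⟨hb, hc⟩⟩
      · exact ⟨by simp [hc], by simp [hc]⟩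
      · exact ⟨by simp [hc], by simp [hc]⟩
      · subst hb hc
        refine ⟨by simp, ?_⟩
        rintro e he
        have : e' = e := by simpa using he
        subst this
        refine ⟨v, hv, fun hvY => ?_⟩
        exact hbY ⟨v, hvY, rfl⟩
      · exact ⟨by simp [hc], by simp [hc]⟩
      · subst hb hc
        exact absurd ⟨e', ih.2 e' rfl, rfl⟩ hF
      · exact absurd hb ih.1
  exact (key _ h).1 rfl

/-- The canonical cut is contained in any cut among the sink edges. -/
lemma TsubF {V : Type*} (G : SimpleGraph V) (Y : Set V) (F : Set (Sym2 (AuxV G)))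
    (hFsub : F ⊆ {p | ∃ e : G.edgeSet, p = s(Sum.inr (Sum.inr e), Sum.inl 1)})
    (hcut : noSTPath G ((fun v => (Sum.inr (Sum.inl v) : AuxV G)) '' Y) F) :
    {p | ∃ e : G.edgeSet, (∃ v ∈ (e : Sym2 V), v ∉ Y) ∧
        p = s(Sum.inr (Sum.inr e), Sum.inl 1)} ⊆ F := by
  rintro p ⟨e, ⟨v, hv, hvY⟩, rfl⟩
  by_contra hpF
  apply hcut
  have hsY : (Sum.inl 0 : AuxV G) ∉ (fun v => (Sum.inr (Sum.inl v) : AuxV G)) '' Y := by simp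
  have htY : (Sum.inl 1 : AuxV G) ∉ (fun v => (Sum.inr (Sum.inl v) : AuxV G)) '' Y := by simp
  have heY : (Sum.inr (Sum.inr e) : AuxV G) ∉ (fun v => (Sum.inr (Sum.inl v) : AuxV G)) '' Y := by
    simp
  have hvY' : (Sum.inr (Sum.inl v) : AuxV G) ∉ (fun v => (Sum.inr (Sum.inl v) : AuxV G)) '' Y := by
    simp [hvY]
  have h1 : s((Sum.inl 0 : AuxV G), Sum.inr (Sum.inl v)) ∉ F := by
    intro h
    obtain ⟨e', he'⟩ := hFsub h
    rw [Sym2.eq_iff] at he'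
    simp at he'
  have h2 : s((Sum.inr (Sum.inl v) : AuxV G), Sum.inr (Sum.inr e)) ∉ F := by
    intro h
    obtain ⟨e', he'⟩ := hFsub h
    rw [Sym2.eq_iff] at he'
    simp at he'
  refine Relation.ReflTransGen.head ⟨Or.inl ⟨v, Or.inl ⟨rfl, rfl⟩⟩, hsY, hvY', h1⟩ ?_
  refine Relation.ReflTransGen.head
    ⟨Or.inr (Or.inl ⟨v, e, hv, Or.inl ⟨rfl, rfl⟩⟩), hvY', heY, h2⟩ ?_
  exact Relation.ReflTransGen.single ⟨Or.inr (Or.inr ⟨e, Or.inl ⟨rfl, rfl⟩⟩), heY, htY, hpF⟩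

/-- Cardinality of the canonical cut. -/
lemma cardT {V : Type*} [Fintype V] (G : SimpleGraph V) (Y : Set V) :
    {p | ∃ e : G.edgeSet, (∃ v ∈ (e : Sym2 V), v ∉ Y) ∧
        p = s((Sum.inr (Sum.inr e) : AuxV G), Sum.inl 1)}.ncard =
      G.edgeSet.ncard - {e ∈ G.edgeSet | ∀ v ∈ e, v ∈ Y}.ncard := by
  classical
  have hinj : Function.Injective
      (fun e : G.edgeSet => s((Sum.inr (Sum.inr e) : AuxV G), Sum.inl 1)) := by
    intro e1 e2 h
    rw [Sym2.eq_iff] at h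
    rcases h with ⟨h1, _⟩ | ⟨h1, h2⟩
    · exact Sum.inr_injective (Sum.inr_injective h1)
    · simp at h1
  have himg : {p | ∃ e : G.edgeSet, (∃ v ∈ (e : Sym2 V), v ∉ Y) ∧
      p = s((Sum.inr (Sum.inr e) : AuxV G), Sum.inl 1)} =
      (fun e : G.edgeSet => s((Sum.inr (Sum.inr e) : AuxV G), Sum.inl 1)) ''
        {e : G.edgeSet | ∃ v ∈ (e : Sym2 V), v ∉ Y} := by
    ext p
    simp only [Set.mem_setOf_eq, Set.mem_image]
    constructor
    · rintro ⟨e, he, rfl⟩; exact ⟨e, he, rfl⟩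
    · rintro ⟨e, he, rfl⟩; exact ⟨e, he, rfl⟩
  rw [himg, Set.ncard_image_of_injective _ hinj]
  have h1 : {e : G.edgeSet | ∃ v ∈ (e : Sym2 V), v ∉ Y}.ncard =
      (Subtype.val '' {e : G.edgeSet | ∃ v ∈ (e : Sym2 V), v ∉ Y}).ncard :=
    (Set.ncard_image_of_injective _ Subtype.val_injective).symm
  have h2 : Subtype.val '' {e : G.edgeSet | ∃ v ∈ (e : Sym2 V), v ∉ Y} =
      G.edgeSet \ {e ∈ G.edgeSet | ∀ v ∈ e, v ∈ Y} := by
    ext x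
    simp only [Set.mem_image, Set.mem_setOf_eq, Set.mem_diff, Subtype.exists,
      exists_and_right, exists_eq_right]
    push_neg
    constructor
    · rintro ⟨hx, v, hv, hvY⟩; exact ⟨hx, fun _ => ⟨v, hv, hvY⟩⟩
    · rintro ⟨hx, h⟩; exact ⟨hx, h hx⟩
  rw [h1, h2, Set.ncard_diff (fun x hx => hx.1) (Set.toFinite _)]

/-- Claim `claimwbudget`: any inclusion-minimal cut `F` among edges incident to `t`
(after interdicting `Y ⊆ V(G)`) consists exactly of the edges `{t_e, t}` for edges `e`
of `G` not induced by `Y`; in particular `|F| = |E(G)| - |E_Y|`. -/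
theorem stmt_12 {V : Type*} [Fintype V] (G : SimpleGraph V)
    (Y : Set V) (F : Set (Sym2 (AuxV G)))
    (hFsub : F ⊆ {p | ∃ e : G.edgeSet, p = s(Sum.inr (Sum.inr e), Sum.inl 1)})
    (hcut : noSTPath G ((fun v => (Sum.inr (Sum.inl v) : AuxV G)) '' Y) F)
    (hmin : ∀ F' ⊆ F, noSTPath G ((fun v => (Sum.inr (Sum.inl v) : AuxV G)) '' Y) F' →
      F' = F) :
    F = {p | ∃ e : G.edgeSet, (∃ v ∈ (e : Sym2 V), v ∉ Y) ∧
          p = s(Sum.inr (Sum.inr e), Sum.inl 1)} ∧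
    F.ncard = G.edgeSet.ncard - {e ∈ G.edgeSet | ∀ v ∈ e, v ∈ Y}.ncard := by
  have hFeq : F = {p | ∃ e : G.edgeSet, (∃ v ∈ (e : Sym2 V), v ∉ Y) ∧
      p = s(Sum.inr (Sum.inr e), Sum.inl 1)} :=
    (hmin _ (TsubF G Y F hFsub hcut) (cutT G Y)).symm
  exact ⟨hFeq, by rw [hFeq]; exact cardT G Y⟩
end

section
/- Let G be a finite simple graph and let H be the graph with vertex set {s, t} ⊔ V(G) ⊔ E(G) (writing t_e for the vertex of H corresponding to edge e of G) and with edge set: {s,v} for every v ∈ V(G); {v, t_e} whenever v is an endpoint of e; and {t_e, t} for every e ∈ E(G). Let Y ⊆ V(G) ∪ {t_e : e ∈ E(G)} and F ⊆ E(H) be such that deleting the vertices Y and the edges F from H leaves no s–t path. Define Ȳ := (Y ∩ V(G)) ∪ {u ∈ V(G) : u is an endpoint of some edge e of G with t_e ∈ Y}. Then |Ȳ| ≤ 2·|Y|, and deleting the vertices Ȳ and the edges F from H also leaves no s–t path. -/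
/-- The replacement set `Ȳ`: keep the original vertices of `Y`, and replace every
interdicted subdivision vertex `t_e` by the two endpoints of `e`. -/
def replaceSubdiv {V : Type*} (G : SimpleGraph V) (Y : Set (AuxV G)) : Set (AuxV G) :=
  {w | (w ∈ Y ∧ ∃ v : V, w = Sum.inr (Sum.inl v)) ∨
       (∃ (v : V) (e : G.edgeSet), v ∈ (e : Sym2 V) ∧ Sum.inr (Sum.inr e) ∈ Y ∧
          w = Sum.inr (Sum.inl v))}

/-- Replacement step in the proof of Theorem `hardbudget`: replacing each interdicted
subdivision vertex `t_e` by the two endpoints of `e` at most doubles the number of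
interdicted vertices and still leaves no `s`–`t` path. -/
theorem stmt_13 {V : Type*} [Fintype V] (G : SimpleGraph V)
    (Y : Set (AuxV G)) (hY : ∀ w ∈ Y, ∃ x, w = Sum.inr x)
    (F : Set (Sym2 (AuxV G)))
    (hcut : noSTPath G Y F) :
    (replaceSubdiv G Y).ncard ≤ 2 * Y.ncard ∧ noSTPath G (replaceSubdiv G Y) F := by
  classical
  have hYfin : Y.Finite := Set.toFinite Y
  constructor
  · -- cardinality bound
    set g1 : AuxV G → AuxV G := fun x =>
      match x with
      | Sum.inr (Sum.inr e) => Sum.inr (Sum.inl (e : Sym2 V).out.1)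
      | x => x with hg1
    set g2 : AuxV G → AuxV G := fun x =>
      match x with
      | Sum.inr (Sum.inr e) => Sum.inr (Sum.inl (e : Sym2 V).out.2)
      | x => x with hg2
    have hsub : replaceSubdiv G Y ⊆ g1 '' Y ∪ g2 '' Y := by
      rintro w hw
      rcases hw with ⟨hwY, v, rfl⟩ | ⟨v, e, hve, heY, rfl⟩
      · exact Or.inl ⟨_, hwY, rfl⟩
      · have : v = (e : Sym2 V).out.1 ∨ v = (e : Sym2 V).out.2 := by
          have h := ((e : Sym2 V).out_eq)
          rw [← h] at hve
          exact Sym2.mem_iff.mp hve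
        rcases this with rfl | rfl
        · exact Or.inl ⟨_, heY, rfl⟩
        · exact Or.inr ⟨_, heY, rfl⟩
    calc (replaceSubdiv G Y).ncard ≤ (g1 '' Y ∪ g2 '' Y).ncard :=
          Set.ncard_le_ncard hsub ((hYfin.image g1).union (hYfin.image g2))
      _ ≤ (g1 '' Y).ncard + (g2 '' Y).ncard := Set.ncard_union_le _ _
      _ ≤ Y.ncard + Y.ncard :=
          Nat.add_le_add (Set.ncard_image_le hYfin) (Set.ncard_image_le hYfin)
      _ = 2 * Y.ncard := (two_mul _).symm
  · -- no s-t path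
    intro hpath
    have hsY : (Sum.inl 0 : AuxV G) ∉ Y := by
      intro h; obtain ⟨x, hx⟩ := hY _ h; exact Sum.inl_ne_inr hx
    set R : AuxV G → AuxV G → Prop := fun x y =>
      auxAdj G x y ∧ x ∉ Y ∧ y ∉ Y ∧ s(x, y) ∉ F with hR
    have key : ∀ z, Relation.ReflTransGen
        (fun x y => auxAdj G x y ∧ x ∉ replaceSubdiv G Y ∧ y ∉ replaceSubdiv G Y ∧
          s(x, y) ∉ F) (Sum.inl 0) z →
        (Relation.ReflTransGen R (Sum.inl 0) z ∧ z ∉ Y) ∨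
          Relation.ReflTransGen R (Sum.inl 0) (Sum.inl 1) := by
      intro z hz
      induction hz with
      | refl => exact Or.inl ⟨Relation.ReflTransGen.refl, hsY⟩
      | @tail b c hb hbc ih =>
        rcases ih with ⟨hsb, hbY⟩ | ht
        · obtain ⟨hadj, hbR, hcR, hF⟩ := hbc
          by_cases hcY : c ∈ Y
          · -- c is interdicted; must be a subdivision vertex
            obtain ⟨x, rfl⟩ := hY _ hcY
            rcases x with v | e
            · exact absurd (Or.inl ⟨hcY, v, rfl⟩) hcR
            · -- c = t_e with t_e ∈ Y; analyze the edge b—t_e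
              rcases hadj with ⟨v, ⟨hb1, hc1⟩ | ⟨hb1, hc1⟩⟩ |
                  ⟨v, e', hve', ⟨hb1, hc1⟩ | ⟨hb1, hc1⟩⟩ | ⟨e', ⟨hb1, hc1⟩ | ⟨hb1, hc1⟩⟩
              · exact absurd hc1 (by simp)
              · exact absurd hc1 (by simp)
              · -- b is an endpoint v of e
                have he : e' = e := by
                  have := hc1; simp only [Sum.inr.injEq] at this; exact this.symm
                subst he
                subst hb1
                exact absurd (Or.inr ⟨v, e', hve', hcY, rfl⟩) hbR
              · exact absurd hc1 (by simp)
              · exact absurd hc1 (by simp)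
              · -- b = t (sink)
                exact Or.inr (hb1 ▸ hsb)
          · exact Or.inl ⟨hsb.tail ⟨hadj, hbY, hcY, hF⟩, hcY⟩
        · exact Or.inr ht
    rcases key _ hpath with ⟨h, _⟩ | h <;> exact hcut h
end

section
/- Let G be a finite simple graph and let H be the graph with vertex set {s, t} ⊔ V(G) ⊔ E(G) (writing t_e for the vertex of H corresponding to edge e of G) and with edge set: {s,v} for every v ∈ V(G); {v, t_e} whenever v is an endpoint of e; and {t_e, t} for every e ∈ E(G). Let k be a natural number. Then the maximum, over all Y ⊆ V(G) with |Y| ≤ k, of the number of edges of G with both endpoints in Y equals |E(G)| minus the minimum, over all Y ⊆ V(G) with |Y| ≤ k, of the minimum cardinality of a set F ⊆ {{t_e, t} : e ∈ E(G)} such that deleting the vertices Y and the edges F from H leaves no s–t path. -/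
section AuxLemmas

variable {V : Type*} {G : SimpleGraph V}

lemma lemA (Y : Set V) (F : Set (Sym2 (AuxV G)))
    (hF : F ⊆ {p | ∃ e : G.edgeSet, p = s(Sum.inr (Sum.inr e), Sum.inl 1)}) :
    noSTPath G ((fun v => (Sum.inr (Sum.inl v) : AuxV G)) '' Y) F ↔
    ∀ e : G.edgeSet, (∃ v ∈ (e : Sym2 V), v ∉ Y) →
      s(Sum.inr (Sum.inr (e : G.edgeSet)), (Sum.inl 1 : AuxV G)) ∈ F := by
  constructor
  · intro hno e ⟨v, hve, hvY⟩
    by_contra hmem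
    apply hno
    have hs : (Sum.inl 0 : AuxV G) ∉ (fun v => (Sum.inr (Sum.inl v) : AuxV G)) '' Y := by
      rintro ⟨w, -, h⟩; exact Sum.inl_ne_inr h.symm
    have ht : (Sum.inl 1 : AuxV G) ∉ (fun v => (Sum.inr (Sum.inl v) : AuxV G)) '' Y := by
      rintro ⟨w, -, h⟩; exact Sum.inl_ne_inr h.symm
    have hv : (Sum.inr (Sum.inl v) : AuxV G) ∉ (fun v => (Sum.inr (Sum.inl v) : AuxV G)) '' Y := by
      rintro ⟨w, hw, h⟩
      simp only [Sum.inr.injEq, Sum.inl.injEq] at h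
      exact hvY (h ▸ hw)
    have hte : (Sum.inr (Sum.inr e) : AuxV G) ∉ (fun v => (Sum.inr (Sum.inl v) : AuxV G)) '' Y := by
      rintro ⟨w, -, h⟩
      simp only [Sum.inr.injEq] at h
      exact Sum.inl_ne_inr h
    refine Relation.ReflTransGen.head ⟨Or.inl ⟨v, Or.inl ⟨rfl, rfl⟩⟩, hs, hv, ?_⟩
      (Relation.ReflTransGen.head ⟨Or.inr (Or.inl ⟨v, e, hve, Or.inl ⟨rfl, rfl⟩⟩), hv, hte, ?_⟩
      (Relation.ReflTransGen.single ⟨Or.inr (Or.inr ⟨e, Or.inl ⟨rfl, rfl⟩⟩), hte, ht, hmem⟩))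
    · intro h
      obtain ⟨e', he'⟩ := hF h
      simp [Sym2.eq_iff, Fin.ext_iff] at he'
    · intro h
      obtain ⟨e', he'⟩ := hF h
      simp [Sym2.eq_iff, Fin.ext_iff] at he'
  · intro h hpath
    set Y' := (fun v => (Sum.inr (Sum.inl v) : AuxV G)) '' Y with hY'
    have key : ∀ x : AuxV G, Relation.ReflTransGen
        (fun x y => auxAdj G x y ∧ x ∉ Y' ∧ y ∉ Y' ∧ s(x, y) ∉ F) (Sum.inl 0) x →
        (x = Sum.inl 0 ∨ (∃ v, x = Sum.inr (Sum.inl v) ∧ v ∉ Y) ∨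
         (∃ e : G.edgeSet, x = Sum.inr (Sum.inr e) ∧ ∃ v ∈ (e : Sym2 V), v ∉ Y)) := by
      intro x hx
      induction hx with
      | refl => exact Or.inl rfl
      | tail _ hstep ih =>
        obtain ⟨hadj, hxY, hyY, hFe⟩ := hstep
        rcases hadj with ⟨v, ⟨hx1, hy1⟩ | ⟨hx1, hy1⟩⟩ |
          ⟨v, e, hve, ⟨hx1, hy1⟩ | ⟨hx1, hy1⟩⟩ | ⟨e, ⟨hx1, hy1⟩ | ⟨hx1, hy1⟩⟩
        · subst hy1
          refine Or.inr (Or.inl ⟨v, rfl, fun hv => hyY ⟨v, hv, rfl⟩⟩)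
        · subst hy1; exact Or.inl rfl
        · subst hx1 hy1
          have hvY : v ∉ Y := by
            rcases ih with h1 | ⟨w, hw, hwY⟩ | ⟨e', he', -⟩
            · exact absurd h1 (by simp)
            · simp only [Sum.inr.injEq, Sum.inl.injEq] at hw; exact hw ▸ hwY
            · exact absurd he' (by simp)
          exact Or.inr (Or.inr ⟨e, rfl, v, hve, hvY⟩)
        · subst hy1
          exact Or.inr (Or.inl ⟨v, rfl, fun hv => hyY ⟨v, hv, rfl⟩⟩)
        · subst hx1 hy1
          have : ∃ w ∈ (e : Sym2 V), w ∉ Y := by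
            rcases ih with h1 | ⟨w, hw, -⟩ | ⟨e', he', hw⟩
            · exact absurd h1 (by simp)
            · simp at hw
            · simp only [Sum.inr.injEq] at he'; exact he' ▸ hw
          exact absurd (h e this) hFe
        · subst hx1
          rcases ih with h1 | ⟨w, hw, -⟩ | ⟨e', he', -⟩
          · exact absurd h1 (by simp [Fin.ext_iff])
          · exact absurd hw (by simp)
          · exact absurd he' (by simp)
    rcases key _ hpath with h1 | ⟨w, hw, -⟩ | ⟨e', he', -⟩
    · exact absurd h1 (by simp [Fin.ext_iff])
    · exact absurd hw (by simp)
    · exact absurd he' (by simp)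

lemma cardF0 [Fintype V] (Y : Set V) :
    ((fun e : G.edgeSet => s(Sum.inr (Sum.inr e), (Sum.inl 1 : AuxV G))) ''
      {e : G.edgeSet | ¬ ∀ v ∈ (e : Sym2 V), v ∈ Y}).ncard
    = G.edgeSet.ncard - {e ∈ G.edgeSet | ∀ v ∈ e, v ∈ Y}.ncard := by
  have hinj : Function.Injective
      (fun e : G.edgeSet => s(Sum.inr (Sum.inr e), (Sum.inl 1 : AuxV G))) := by
    intro e e' h
    simp only [Sym2.eq_iff] at h
    rcases h with ⟨h1, -⟩ | ⟨h1, -⟩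
    · simpa using h1
    · exact absurd h1 (by simp)
  rw [Set.ncard_image_of_injective _ hinj]
  have h1 : {e ∈ G.edgeSet | ∀ v ∈ e, v ∈ Y} =
      Subtype.val '' {e : G.edgeSet | ∀ v ∈ (e : Sym2 V), v ∈ Y} := by
    ext x
    constructor
    · rintro ⟨hx, hP⟩; exact ⟨⟨x, hx⟩, hP, rfl⟩
    · rintro ⟨⟨y, hy⟩, hP, rfl⟩; exact ⟨hy, hP⟩
  rw [h1, Set.ncard_image_of_injective _ Subtype.val_injective]
  have h2 : {e : G.edgeSet | ¬ ∀ v ∈ (e : Sym2 V), v ∈ Y} =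
      Set.univ \ {e : G.edgeSet | ∀ v ∈ (e : Sym2 V), v ∈ Y} := by
    ext e; simp
  rw [h2, Set.ncard_diff (Set.subset_univ _), Set.ncard_univ, Nat.card_coe_set_eq]

end AuxLemmas

/-- The relation `l* = |E(G)| - c*`: the Densest `k`-Subgraph value of `G` equals
`|E(G)|` minus the optimal value of the interdiction instance on the auxiliary graph `H`
in which only sets `Y ⊆ V(G)` of size at most `k` may be interdicted and only edges
incident to `t` may be cut. -/
theorem stmt_14 {V : Type*} [Fintype V] (G : SimpleGraph V) (k : ℕ) :
    sSup {n : ℕ | ∃ Y : Set V, Y.ncard ≤ k ∧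
        n = {e ∈ G.edgeSet | ∀ v ∈ e, v ∈ Y}.ncard}
      =
    G.edgeSet.ncard -
      sInf {n : ℕ | ∃ (Y : Set V) (F : Set (Sym2 (AuxV G))), Y.ncard ≤ k ∧
        F ⊆ {p | ∃ e : G.edgeSet, p = s(Sum.inr (Sum.inr e), Sum.inl 1)} ∧
        noSTPath G ((fun v => (Sum.inr (Sum.inl v) : AuxV G)) '' Y) F ∧
        n = F.ncard} := by
  set Ssup := {n : ℕ | ∃ Y : Set V, Y.ncard ≤ k ∧
      n = {e ∈ G.edgeSet | ∀ v ∈ e, v ∈ Y}.ncard} with hSsup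
  set Sinf := {n : ℕ | ∃ (Y : Set V) (F : Set (Sym2 (AuxV G))), Y.ncard ≤ k ∧
      F ⊆ {p | ∃ e : G.edgeSet, p = s(Sum.inr (Sum.inr e), Sum.inl 1)} ∧
      noSTPath G ((fun v => (Sum.inr (Sum.inl v) : AuxV G)) '' Y) F ∧
      n = F.ncard} with hSinf
  have hbdd : BddAbove Ssup := by
    refine ⟨G.edgeSet.ncard, ?_⟩
    rintro n ⟨Y, -, rfl⟩
    exact Set.ncard_le_ncard (fun x hx => hx.1) (Set.toFinite _)
  have hne : Ssup.Nonempty := by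
    refine ⟨0, ∅, by simp, ?_⟩
    have : {e ∈ G.edgeSet | ∀ v ∈ e, v ∈ (∅ : Set V)} = ∅ := by
      ext e
      simp only [Set.mem_setOf_eq, Set.mem_empty_iff_false, iff_false, not_and]
      intro he h
      induction e with
      | _ a b => exact h a (Sym2.mem_mk_left a b)
    rw [this, Set.ncard_empty]
  set l := sSup Ssup with hl
  obtain ⟨Y0, hY0k, hY0⟩ := Nat.sSup_mem hne hbdd
  have hlle : l ≤ G.edgeSet.ncard := by
    rw [hl, hY0]; exact Set.ncard_le_ncard (fun x hx => hx.1) (Set.toFinite _)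
  -- the canonical cut for a given Y
  have hinfmem : G.edgeSet.ncard - l ∈ Sinf := by
    refine ⟨Y0, (fun e : G.edgeSet => s(Sum.inr (Sum.inr e), (Sum.inl 1 : AuxV G))) ''
      {e : G.edgeSet | ¬ ∀ v ∈ (e : Sym2 V), v ∈ Y0}, hY0k, ?_, ?_, ?_⟩
    · rintro p ⟨e, -, rfl⟩; exact ⟨e, rfl⟩
    · rw [lemA Y0 _ (by rintro p ⟨e, -, rfl⟩; exact ⟨e, rfl⟩)]
      rintro e ⟨v, hve, hvY⟩
      exact ⟨e, fun h => hvY (h v hve), rfl⟩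
    · rw [cardF0, hl, hY0]
  have hinflb : ∀ n ∈ Sinf, G.edgeSet.ncard - l ≤ n := by
    rintro n ⟨Y, F, hYk, hFsub, hno, rfl⟩
    have hsub : (fun e : G.edgeSet => s(Sum.inr (Sum.inr e), (Sum.inl 1 : AuxV G))) ''
        {e : G.edgeSet | ¬ ∀ v ∈ (e : Sym2 V), v ∈ Y} ⊆ F := by
      rintro p ⟨e, he, rfl⟩
      simp only [Set.mem_setOf_eq] at he
      push_neg at he
      exact (lemA Y F hFsub).1 hno e he
    have h1 : G.edgeSet.ncard - {e ∈ G.edgeSet | ∀ v ∈ e, v ∈ Y}.ncard ≤ F.ncard := by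
      rw [← cardF0]
      exact Set.ncard_le_ncard hsub (Set.toFinite _)
    have h2 : {e ∈ G.edgeSet | ∀ v ∈ e, v ∈ Y}.ncard ≤ l :=
      le_csSup hbdd ⟨Y, hYk, rfl⟩
    omega
  have hinfeq : sInf Sinf = G.edgeSet.ncard - l :=
    le_antisymm (Nat.sInf_le hinfmem) (le_csInf ⟨_, hinfmem⟩ hinflb)
  rw [hinfeq]
  omega
end

section
/- Let G be a finite simple graph and let H be the graph with vertex set {s, t} ⊔ V(G) ⊔ E(G) (writing t_e for the vertex of H corresponding to edge e of G) and with edge set: {s,v} for every v ∈ V(G); {v, t_e} whenever v is an endpoint of e; and {t_e, t} for every e ∈ E(G). Let Y be a set of vertices of H with s, t ∉ Y, and let F ⊆ E(H) be a set of edges of H none of which is incident to s, such that deleting the vertices Y and the edges F from H leaves no s–t path. Suppose {v, t_e} ∈ F for some v ∈ V(G) and e ∈ E(G). Then deleting the vertices Y and the edges (F \ {{v, t_e}}) ∪ {{t_e, t}} from H also leaves no s–t path. -/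
/-- Exchange argument in the proof of Theorem `uhard`: any cut edge between an original
vertex and a subdivision vertex `t_e` can be replaced by the edge `{t_e, t}` without
destroying the cut. -/
theorem stmt_15 {V : Type*} [Fintype V] (G : SimpleGraph V)
    (Y : Set (AuxV G)) (hs : (Sum.inl 0 : AuxV G) ∉ Y) (ht : (Sum.inl 1 : AuxV G) ∉ Y)
    (F : Set (Sym2 (AuxV G))) (hFs : ∀ p ∈ F, (Sum.inl 0 : AuxV G) ∉ p)
    (hcut : noSTPath G Y F)
    (v : V) (e : G.edgeSet)
    (hve : s((Sum.inr (Sum.inl v) : AuxV G), Sum.inr (Sum.inr e)) ∈ F) :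
    noSTPath G Y
      ((F \ {s((Sum.inr (Sum.inl v) : AuxV G), Sum.inr (Sum.inr e))}) ∪
        {s((Sum.inr (Sum.inr e) : AuxV G), Sum.inl 1)}) := by
  intro hpath
  -- the old step relation
  set R : AuxV G → AuxV G → Prop :=
    fun x y => auxAdj G x y ∧ x ∉ Y ∧ y ∉ Y ∧ s(x, y) ∉ F with hR
  -- the new edge set
  set F' : Set (Sym2 (AuxV G)) :=
    (F \ {s((Sum.inr (Sum.inl v) : AuxV G), Sum.inr (Sum.inr e))}) ∪
      {s((Sum.inr (Sum.inr e) : AuxV G), Sum.inl 1)} with hF'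
  -- every original vertex not in Y is reachable from s under the old relation
  have hSorig : ∀ w : V, (Sum.inr (Sum.inl w) : AuxV G) ∉ Y →
      Relation.ReflTransGen R (Sum.inl 0) (Sum.inr (Sum.inl w)) := by
    intro w hw
    refine Relation.ReflTransGen.single ⟨Or.inl ⟨w, Or.inl ⟨rfl, rfl⟩⟩, hs, hw, ?_⟩
    intro hmem
    exact hFs _ hmem (by simp)
  -- any edge in F other than the special edge is in F'
  have hFF' : ∀ p ∈ F,
      p ≠ s((Sum.inr (Sum.inl v) : AuxV G), Sum.inr (Sum.inr e)) → p ∈ F' := by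
    intro p hp hne
    exact Or.inl ⟨hp, hne⟩
  -- the key invariant
  have key : ∀ x : AuxV G,
      Relation.ReflTransGen
        (fun x y => auxAdj G x y ∧ x ∉ Y ∧ y ∉ Y ∧ s(x, y) ∉ F')
        (Sum.inl 0) x →
      Relation.ReflTransGen R (Sum.inl 0) x ∨ x = Sum.inr (Sum.inr e) := by
    intro x hx
    induction hx with
    | refl => exact Or.inl Relation.ReflTransGen.refl
    | tail hb hbc ih =>
      obtain ⟨hadj, hbY, hcY, hbcF⟩ := hbc
      rcases hadj with ⟨w, ⟨hb1, hc1⟩ | ⟨hb1, hc1⟩⟩ |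
        ⟨w, e', hwe', ⟨hb1, hc1⟩ | ⟨hb1, hc1⟩⟩ | ⟨e', ⟨hb1, hc1⟩ | ⟨hb1, hc1⟩⟩
      · subst hc1
        exact Or.inl (hSorig w hcY)
      · subst hc1
        exact Or.inl Relation.ReflTransGen.refl
      · -- step from original vertex w to t_{e'}
        subst hb1; subst hc1
        by_cases hsp : s((Sum.inr (Sum.inl w) : AuxV G), Sum.inr (Sum.inr e'))
            = s((Sum.inr (Sum.inl v) : AuxV G), Sum.inr (Sum.inr e))
        · rw [Sym2.eq_iff] at hsp
          rcases hsp with ⟨_, h2⟩ | ⟨h1, _⟩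
          · exact Or.inr h2
          · exact absurd h1 (by simp)
        · refine Or.inl ((hSorig w hbY).tail
            ⟨Or.inr (Or.inl ⟨w, e', hwe', Or.inl ⟨rfl, rfl⟩⟩), hbY, hcY, ?_⟩)
          intro hF
          exact hbcF (hFF' _ hF hsp)
      · subst hc1
        exact Or.inl (hSorig w hcY)
      · -- step from t_{e'} to t
        subst hb1; subst hc1
        have hne : e' ≠ e := by
          rintro rfl
          exact hbcF (Or.inr rfl)
        have hbS : Relation.ReflTransGen R (Sum.inl 0) (Sum.inr (Sum.inr e')) := by
          rcases ih with h | h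
          · exact h
          · exact absurd (by injection (Sum.inr.inj h)) hne
        refine Or.inl (hbS.tail ⟨Or.inr (Or.inr ⟨e', Or.inl ⟨rfl, rfl⟩⟩), hbY, hcY, ?_⟩)
        intro hF
        refine hbcF (hFF' _ hF ?_)
        simp [Sym2.eq_iff]
      · -- step from t to t_{e'}: then t was already reached, contradiction
        subst hb1; subst hc1
        rcases ih with h | h
        · exact absurd h hcut
        · simp at h
  rcases key _ hpath with h | h
  · exact hcut h
  · simp at h
end
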